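/- For all integers n ≥ 2, k ≥ 1, and m ≥ 0 with m(n−1) ≤ k, there exist a finite set S, a normalized monotone submodular function f : 2^S → ℝ, action sets S_1, …, S_n ⊆ S, and an augmented greedy profile (x_i, z_i)_{i=1}^n for (f, (S_i), k, m) such that f(x_1 ∪ … ∪ x_n) = k(n−1) + m(n−1) and OPT(f,(S_i),k) = 2k(n−1) + m(n−1). -/

import Mathlib

open Finset

variable {α : Type*}

/-- `f` is monotone on finsets. -/
def IsMonotoneFn (f : Finset α → ℝ) : Prop := ∀ A B : Finset α, A ⊆ B → f A ≤ f B

/-- `f` is submodular. -/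
def IsSubmodularFn [DecidableEq α] (f : Finset α → ℝ) : Prop :=
  ∀ A B : Finset α, A ⊆ B → ∀ s ∉ B, f (insert s A) - f A ≥ f (insert s B) - f B

/-- Marginal contribution Δ(A|B) = f(A ∪ B) − f(B). -/
def marg [DecidableEq α] (f : Finset α → ℝ) (A B : Finset α) : ℝ := f (A ∪ B) - f B

/-- Δ^l(A|B): best marginal of a subset of `A` of size at most `l`. -/
noncomputable def margSup [DecidableEq α] (f : Finset α → ℝ) (l : ℕ) (A B : Finset α) : ℝ :=
  (A.powerset.filter (fun C => C.card ≤ l)).sup' ⟨∅, by simp⟩ (fun C => marg f C B)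

/-- Union of the first `i` sets: x_0 ∪ ⋯ ∪ x_{i-1}. -/
def pref [DecidableEq α] (x : ℕ → Finset α) (i : ℕ) : Finset α := (Finset.range i).biUnion x

/-- A nominal greedy profile. -/
def NomGreedy [DecidableEq α] (f : Finset α → ℝ) (Ss : ℕ → Finset α) (k n : ℕ)
    (x : ℕ → Finset α) : Prop :=
  ∀ i < n, x i ⊆ Ss i ∧ (x i).card ≤ k ∧
    ∀ c : Finset α, c ⊆ Ss i → c.card ≤ k → f (c ∪ pref x i) ≤ f (x i ∪ pref x i)

/-- An augmented greedy profile. -/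
def AugGreedy [DecidableEq α] (f : Finset α → ℝ) (Ss : ℕ → Finset α) (k m n : ℕ)
    (x z : ℕ → Finset α) : Prop :=
  ∀ i < n,
    (x i ⊆ Ss i ∪ pref z i ∧ (x i).card ≤ k ∧
      ∀ c : Finset α, c ⊆ Ss i ∪ pref z i → c.card ≤ k →
        f (c ∪ pref x i) ≤ f (x i ∪ pref x i)) ∧
    ∃ zk zr : Finset α,
      z i = zk ∪ zr ∧ zk ⊆ Ss i ∧ zk.card ≤ min k m ∧
      (∀ w : Finset α, w ⊆ Ss i → w.card ≤ min k m →
        marg f w (pref x (i + 1)) ≤ marg f zk (pref x (i + 1))) ∧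
      zr ⊆ Ss i ∧ zr.card ≤ m - k

/-- The optimal value OPT(f, (S_i), k) over feasible profiles with n agents. -/
noncomputable def OPTval [DecidableEq α] [Fintype α] (f : Finset α → ℝ) (Ss : ℕ → Finset α)
    (n k : ℕ) : ℝ :=
  ((Finset.univ : Finset (Fin n → Finset α)).filter
      (fun y => ∀ i : Fin n, y i ⊆ Ss (i : ℕ) ∧ (y i).card ≤ k)).sup'
    ⟨(fun _ => ∅), by simp⟩ (fun y => f (Finset.univ.biUnion (fun i => y i)))

namespace S14


variable (n k m : ℕ)

def NE : ℕ := 2*k+m+(n-1)*k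

abbrev Pt := Fin (n-1) × Fin (2*k+m)

def cov (t : ℕ) : Finset (Pt n k m) :=
  univ.filter (fun q =>
    if t < 2*k+m then (q.2 : ℕ) = t
    else (q.1 : ℕ) = (t - (2*k+m)) / k ∧
      ((q.2 : ℕ) = (t-(2*k+m)) % k ∨ ((t-(2*k+m)) % k < m ∧ (q.2:ℕ) = 2*k + (t-(2*k+m)) % k)))

def cover (A : Finset (Fin (NE n k m))) : Finset (Pt n k m) :=
  A.biUnion (fun a => cov n k m a.val)

def ff (A : Finset (Fin (NE n k m))) : ℝ := ((cover n k m A).card : ℝ)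

variable {n k m}

lemma mem_cov_lt {t : ℕ} (ht : t < 2*k+m) {q : Pt n k m} : q ∈ cov n k m t ↔ (q.2 : ℕ) = t := by
  simp [cov, ht]

lemma mem_cov_ge {t : ℕ} (ht : ¬ t < 2*k+m) {q : Pt n k m} :
    q ∈ cov n k m t ↔ ((q.1 : ℕ) = (t - (2*k+m)) / k ∧
      ((q.2 : ℕ) = (t-(2*k+m)) % k ∨ ((t-(2*k+m)) % k < m ∧ (q.2:ℕ) = 2*k + (t-(2*k+m)) % k))) := by
  simp [cov, ht]

lemma cover_union (A B : Finset (Fin (NE n k m))) :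
    cover n k m (A ∪ B) = cover n k m A ∪ cover n k m B := by
  ext q
  simp only [cover, mem_biUnion, mem_union]
  constructor
  · rintro ⟨a, (ha | ha), hq⟩
    · exact Or.inl ⟨a, ha, hq⟩
    · exact Or.inr ⟨a, ha, hq⟩
  · rintro (⟨a, ha, hq⟩ | ⟨a, ha, hq⟩)
    · exact ⟨a, Or.inl ha, hq⟩
    · exact ⟨a, Or.inr ha, hq⟩

lemma cover_mono {A B : Finset (Fin (NE n k m))} (h : A ⊆ B) : cover n k m A ⊆ cover n k m B :=
  Finset.biUnion_subset_biUnion_of_subset_left _ h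

lemma ff_empty : ff n k m ∅ = 0 := by simp [ff, cover]

lemma ff_mono {A B : Finset (Fin (NE n k m))} (h : A ⊆ B) : ff n k m A ≤ ff n k m B := by
  unfold ff
  exact_mod_cast Finset.card_le_card (cover_mono h)

lemma ff_insert (s : Fin (NE n k m)) (A : Finset (Fin (NE n k m))) :
    ff n k m (insert s A) - ff n k m A = ((cov n k m s.val \ cover n k m A).card : ℝ) := by
  have h1 : cover n k m (insert s A) = cov n k m s.val ∪ cover n k m A := by
    simp [cover, Finset.biUnion_insert]
  have h2 := Finset.card_sdiff_add_card (cov n k m s.val) (cover n k m A)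
  rw [ff, ff, h1, ← h2]
  push_cast; ring

lemma ff_submodular {A B : Finset (Fin (NE n k m))} (h : A ⊆ B) (s : Fin (NE n k m)) :
    ff n k m (insert s A) - ff n k m A ≥ ff n k m (insert s B) - ff n k m B := by
  rw [ff_insert, ff_insert]
  exact_mod_cast Finset.card_le_card (Finset.sdiff_subset_sdiff (le_refl _) (cover_mono h))

lemma card_filter_val (N : ℕ) (p : ℕ → Prop) [DecidablePred p] :
    ((univ : Finset (Fin N)).filter (fun a => p a.val)).card = ((range N).filter p).card := by
  rw [← Finset.card_image_of_injective _ Fin.val_injective]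
  congr 1
  ext t
  simp only [mem_image, mem_filter, mem_univ, true_and, mem_range]
  constructor
  · rintro ⟨a, ha, rfl⟩; exact ⟨a.isLt, ha⟩
  · rintro ⟨ht, hp⟩; exact ⟨⟨t, ht⟩, hp, rfl⟩

lemma card_filter_snd {r c : ℕ} (p : Fin c → Prop) [DecidablePred p] :
    ((univ : Finset (Fin r × Fin c)).filter (fun q => p q.2)).card = r * (univ.filter p).card := by
  have h : (univ : Finset (Fin r × Fin c)).filter (fun q => p q.2) = univ ×ˢ (univ.filter p) := by
    ext q; simp [Finset.mem_product]
  rw [h, Finset.card_product, Finset.card_univ, Fintype.card_fin]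


variable (n k m)

def DD : Finset (Fin (NE n k m)) := univ.filter (fun a => (a:ℕ) < k)
def EE : Finset (Fin (NE n k m)) := univ.filter (fun a => 2*k ≤ (a:ℕ) ∧ (a:ℕ) < 2*k+m)
def GG : Finset (Fin (NE n k m)) := univ.filter (fun a => k ≤ (a:ℕ) ∧ (a:ℕ) < 2*k)
def Sset (i : ℕ) : Finset (Fin (NE n k m)) :=
  if i = 0 then univ.filter (fun a => (a:ℕ) < 2*k+m)
  else univ.filter (fun a => 2*k+m+(i-1)*k ≤ (a:ℕ) ∧ (a:ℕ) < 2*k+m+i*k)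
def RR : Finset (Pt n k m) := univ.filter (fun q => (q.2:ℕ) < k)
def RX : Finset (Pt n k m) := univ.filter (fun q => (q.2:ℕ) < k ∨ 2*k ≤ (q.2:ℕ))
def xf (i : ℕ) : Finset (Fin (NE n k m)) :=
  if i = 0 then DD n k m else if i = 1 then EE n k m else ∅
def zf (i : ℕ) : Finset (Fin (NE n k m)) := if i = 0 then EE n k m else ∅

variable {n k m}

lemma range_filter_lt {a N : ℕ} (h : a ≤ N) :
    (range N).filter (fun t => t < a) = range a := by
  ext t; simp only [mem_filter, mem_range]; omega

lemma range_filter_Ico {a b N : ℕ} (h : b ≤ N) :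
    (range N).filter (fun t => a ≤ t ∧ t < b) = Ico a b := by
  ext t; simp only [mem_filter, mem_range, mem_Ico]; omega

lemma card_DD : (DD n k m).card = k := by
  rw [DD, card_filter_val (NE n k m) (fun t => t < k), range_filter_lt (by simp only [NE]; omega), card_range]

lemma card_EE : (EE n k m).card = m := by
  rw [EE, card_filter_val (NE n k m) (fun t => 2*k ≤ t ∧ t < 2*k+m), range_filter_Ico (by simp only [NE]; omega), Nat.card_Ico]; omega

lemma card_GG : (GG n k m).card = k := by
  rw [GG, card_filter_val (NE n k m) (fun t => k ≤ t ∧ t < 2*k), range_filter_Ico (by simp only [NE]; omega), Nat.card_Ico]; omega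

lemma card_Sset {i : ℕ} (h1 : 1 ≤ i) (h2 : i < n) : (Sset n k m i).card = k := by
  have hb : 2*k+m+i*k ≤ NE n k m := by
    have : i * k ≤ (n-1) * k := Nat.mul_le_mul_right k (by omega)
    simp only [NE]; omega
  rw [Sset, if_neg (by omega), card_filter_val (NE n k m) (fun t => 2*k+m+(i-1)*k ≤ t ∧ t < 2*k+m+i*k), range_filter_Ico hb, Nat.card_Ico]
  have : (i-1)*k + k = i * k := by
    cases i with
    | zero => omega
    | succ j => simp [Nat.succ_sub_one, Nat.succ_mul]
  omega

lemma card_RR : (RR n k m).card = (n-1)*k := by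
  rw [RR, card_filter_snd (fun j : Fin (2*k+m) => (j:ℕ) < k), card_filter_val (2*k+m) (fun t => t < k), range_filter_lt (by omega), card_range]

lemma card_RX : (RX n k m).card = (n-1)*(k+m) := by
  rw [RX, card_filter_snd (fun j : Fin (2*k+m) => (j:ℕ) < k ∨ 2*k ≤ (j:ℕ)), card_filter_val (2*k+m) (fun t => t < k ∨ 2*k ≤ t)]
  congr 1
  have : (range (2*k+m)).filter (fun t => t < k ∨ 2*k ≤ t) = range k ∪ Ico (2*k) (2*k+m) := by
    ext t; simp only [mem_filter, mem_range, mem_union, mem_Ico]; omega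
  rw [this, card_union_of_disjoint (by simp [Finset.disjoint_left]; omega), card_range,
    Nat.card_Ico]
  omega

lemma card_cov {t : ℕ} (ht : t < 2*k+m) : (cov n k m t).card = n - 1 := by
  have : cov n k m t = univ.filter (fun q : Pt n k m => (q.2:ℕ) = t) := by
    ext q; rw [mem_cov_lt ht]; simp
  rw [this, card_filter_snd (fun j : Fin (2*k+m) => (j:ℕ) = t), card_filter_val (2*k+m) (fun j => j = t)]
  have : (range (2*k+m)).filter (fun j => j = t) = {t} := by
    ext j; simp only [mem_filter, mem_range, mem_singleton]; omega
  rw [this, card_singleton, mul_one]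

lemma cover_DD : cover n k m (DD n k m) = RR n k m := by
  ext q
  simp only [cover, DD, RR, mem_biUnion, mem_filter, mem_univ, true_and]
  constructor
  · rintro ⟨a, ha, hq⟩
    rw [mem_cov_lt (by omega)] at hq
    omega
  · intro h
    have hlt : (q.2:ℕ) < NE n k m := by simp only [NE]; omega
    refine ⟨⟨(q.2:ℕ), hlt⟩, h, ?_⟩
    exact (mem_cov_lt (show (q.2:ℕ) < 2*k+m by omega)).mpr rfl

lemma cover_EE : cover n k m (EE n k m) =
    univ.filter (fun q : Pt n k m => 2*k ≤ (q.2:ℕ)) := by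
  ext q
  have hq2 := q.2.isLt
  simp only [cover, EE, mem_biUnion, mem_filter, mem_univ, true_and]
  constructor
  · rintro ⟨a, ha, hq⟩
    rw [mem_cov_lt (by omega)] at hq
    omega
  · intro h
    have hlt : (q.2:ℕ) < NE n k m := by simp only [NE]; omega
    refine ⟨⟨(q.2:ℕ), hlt⟩, ⟨h, hq2⟩, ?_⟩
    exact (mem_cov_lt q.2.isLt).mpr rfl

lemma cover_DE : cover n k m (DD n k m ∪ EE n k m) = RX n k m := by
  rw [cover_union, cover_DD, cover_EE]
  ext q; simp only [RR, RX, mem_union, mem_filter, mem_univ, true_and]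

lemma cov_subset_RX (hk : 1 ≤ k) {t : ℕ} (ht : ¬(k ≤ t ∧ t < 2*k)) :
    cov n k m t ⊆ RX n k m := by
  intro q hq
  simp only [RX, mem_filter, mem_univ, true_and]
  by_cases h : t < 2*k+m
  · rw [mem_cov_lt h] at hq; omega
  · rw [mem_cov_ge h] at hq
    have := Nat.mod_lt (t - (2*k+m)) hk
    omega


lemma pref_xf_zero : pref (xf n k m) 0 = ∅ := by simp [pref]

lemma pref_xf_one : pref (xf n k m) 1 = DD n k m := by
  simp [pref, xf]

lemma pref_xf_ge2 {i : ℕ} (h : 2 ≤ i) : pref (xf n k m) i = DD n k m ∪ EE n k m := by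
  ext a
  simp only [pref, mem_biUnion, mem_range, mem_union]
  constructor
  · rintro ⟨j, hj, ha⟩
    match j, ha with
    | 0, ha => exact Or.inl (by simpa [xf] using ha)
    | 1, ha => exact Or.inr (by simpa [xf] using ha)
    | (j+2), ha => simp [xf] at ha
  · rintro (ha | ha)
    · exact ⟨0, by omega, by simpa [xf] using ha⟩
    · exact ⟨1, by omega, by simpa [xf] using ha⟩

lemma pref_zf_ge1 {i : ℕ} (h : 1 ≤ i) : pref (zf n k m) i = EE n k m := by
  ext a
  simp only [pref, mem_biUnion, mem_range]
  constructor
  · rintro ⟨j, hj, ha⟩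
    match j, ha with
    | 0, ha => exact (by simpa [zf] using ha)
    | (j+1), ha => simp [zf] at ha
  · intro ha
    exact ⟨0, by omega, by simpa [zf] using ha⟩

lemma marg_eq (w P : Finset (Fin (NE n k m))) :
    marg (ff n k m) w P = ((cover n k m (w ∪ P)).card : ℝ) - ((cover n k m P).card : ℝ) := rfl

lemma marg_nonpos {w P : Finset (Fin (NE n k m))}
    (h : cover n k m w ⊆ cover n k m P) : marg (ff n k m) w P ≤ 0 := by
  rw [marg_eq, cover_union, Finset.union_eq_right.mpr h]
  simp

lemma cover_card_le_of_small {c : Finset (Fin (NE n k m))}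
    (hc : ∀ a ∈ c, (a : ℕ) < 2*k+m) : (cover n k m c).card ≤ c.card * (n-1) := by
  refine le_trans (Finset.card_biUnion_le) ?_
  rw [Finset.sum_const_nat (m := n-1) (fun a ha => card_cov (hc a ha))]

lemma Sset_mem_ge {i : ℕ} (hi : 1 ≤ i) {a : Fin (NE n k m)} (ha : a ∈ Sset n k m i) :
    2*k+m ≤ (a:ℕ) := by
  rw [Sset, if_neg (by omega), mem_filter] at ha
  omega

lemma cover_c_subset_RX (hk : 1 ≤ k) {i : ℕ} (hi : 1 ≤ i) {c : Finset (Fin (NE n k m))}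
    (hc : c ⊆ Sset n k m i ∪ EE n k m) : cover n k m c ⊆ RX n k m := by
  intro q hq
  rw [cover, mem_biUnion] at hq
  obtain ⟨a, ha, hq⟩ := hq
  rcases mem_union.mp (hc ha) with h | h
  · exact cov_subset_RX hk (by have := Sset_mem_ge hi h; omega) hq
  · rw [EE, mem_filter] at h
    exact cov_subset_RX hk (by omega) hq

lemma pref_zf_zero : pref (zf n k m) 0 = ∅ := by simp [pref]

lemma RR_subset_RX : RR n k m ⊆ RX n k m := by
  intro q hq
  simp only [RR, RX, mem_filter, mem_univ, true_and] at hq ⊢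
  omega

lemma ff_DD : ff n k m (DD n k m) = (((n-1)*k : ℕ) : ℝ) := by
  rw [ff, cover_DD, card_RR]

lemma ff_DE : ff n k m (DD n k m ∪ EE n k m) = (((n-1)*(k+m) : ℕ) : ℝ) := by
  rw [ff, cover_DE, card_RX]

lemma ff_ED : ff n k m (EE n k m ∪ DD n k m) = (((n-1)*(k+m) : ℕ) : ℝ) := by
  rw [union_comm]; exact ff_DE

lemma ff_le_RX {A : Finset (Fin (NE n k m))} (h : cover n k m A ⊆ RX n k m) :
    ff n k m A ≤ (((n-1)*(k+m) : ℕ) : ℝ) := by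
  rw [ff, ← card_RX (n := n)]
  exact_mod_cast Finset.card_le_card h

lemma GG_subset_S0 : GG n k m ⊆ Sset n k m 0 := by
  intro a ha
  rw [GG, mem_filter] at ha
  rw [Sset, if_pos rfl, mem_filter]
  exact ⟨ha.1, by omega⟩

lemma DD_subset_S0 : DD n k m ⊆ Sset n k m 0 := by
  intro a ha
  rw [DD, mem_filter] at ha
  rw [Sset, if_pos rfl, mem_filter]
  exact ⟨ha.1, by omega⟩

lemma EE_subset_S0 : EE n k m ⊆ Sset n k m 0 := by
  intro a ha
  rw [EE, mem_filter] at ha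
  rw [Sset, if_pos rfl, mem_filter]
  exact ⟨ha.1, by omega⟩

lemma ff_univ_of_cover_univ {A : Finset (Fin (NE n k m))}
    (h : cover n k m A = univ) : ff n k m A = (((n-1)*(2*k+m) : ℕ) : ℝ) := by
  rw [ff, h, card_univ]
  norm_cast
  simp [Fintype.card_prod]

lemma ff_le_univ (A : Finset (Fin (NE n k m))) :
    ff n k m A ≤ (((n-1)*(2*k+m) : ℕ) : ℝ) := by
  have : (cover n k m A).card ≤ (n-1)*(2*k+m) := by
    have h2 := Finset.card_le_univ (cover n k m A)
    rwa [show Fintype.card (Pt n k m) = (n-1)*(2*k+m) by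
      simp [Fintype.card_prod]] at h2
  rw [ff]
  exact_mod_cast this

lemma xf_zero : xf n k m 0 = DD n k m := rfl
lemma xf_one : xf n k m 1 = EE n k m := rfl
lemma xf_ge2 {i : ℕ} (h : 2 ≤ i) : xf n k m i = ∅ := by
  rw [xf, if_neg (by omega), if_neg (by omega)]
lemma zf_zero : zf n k m 0 = EE n k m := rfl
lemma zf_ge1 {i : ℕ} (h : 1 ≤ i) : zf n k m i = ∅ := by rw [zf, if_neg (by omega)]

lemma mem_cov_point (hk : 1 ≤ k) (r c : ℕ) (hc : c < k) (q : Pt n k m)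
    (hq1 : (q.1:ℕ) = r) (hq2 : (q.2:ℕ) = c) :
    q ∈ cov n k m (2*k+m + (k*r + c)) := by
  rw [mem_cov_ge (by omega)]
  have hs : 2*k+m + (k*r + c) - (2*k+m) = k*r + c := by omega
  rw [hs, Nat.mul_add_div hk, Nat.mul_add_mod, Nat.div_eq_of_lt hc, Nat.mod_eq_of_lt hc,
    add_zero]
  exact ⟨hq1, Or.inl hq2⟩

lemma mem_cov_point2 (hk : 1 ≤ k) (hmk : m ≤ k) (r j : ℕ) (hj : j < m) (q : Pt n k m)
    (hq1 : (q.1:ℕ) = r) (hq2 : (q.2:ℕ) = 2*k + j) :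
    q ∈ cov n k m (2*k+m + (k*r + j)) := by
  rw [mem_cov_ge (by omega)]
  have hs : 2*k+m + (k*r + j) - (2*k+m) = k*r + j := by omega
  have hjk : j < k := lt_of_lt_of_le hj hmk
  rw [hs, Nat.mul_add_div hk, Nat.mul_add_mod, Nat.div_eq_of_lt hjk, Nat.mod_eq_of_lt hjk,
    add_zero]
  exact ⟨hq1, Or.inr ⟨hj, hq2⟩⟩

lemma cover_opt (hn : 2 ≤ n) (hk : 1 ≤ k) (hmk : m ≤ k) {A : Finset (Fin (NE n k m))}
    (hG : GG n k m ⊆ A) (hS : ∀ i, 1 ≤ i → i < n → Sset n k m i ⊆ A) :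
    cover n k m A = univ := by
  apply Finset.eq_univ_of_forall
  intro q
  rw [cover, mem_biUnion]
  have hr : (q.1:ℕ) < n-1 := q.1.isLt
  have hc : (q.2:ℕ) < 2*k+m := q.2.isLt
  by_cases h1 : k ≤ (q.2:ℕ) ∧ (q.2:ℕ) < 2*k
  · have hlt : (q.2:ℕ) < NE n k m := by simp only [NE]; omega
    refine ⟨⟨(q.2:ℕ), hlt⟩, hG ?_, (mem_cov_lt hc).mpr rfl⟩
    rw [GG, mem_filter]
    exact ⟨mem_univ _, h1⟩
  · have hkr : k*((q.1:ℕ)+1) ≤ k*(n-1) := Nat.mul_le_mul_left k (by omega)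
    have hks : k*((q.1:ℕ)+1) = k*(q.1:ℕ) + k := Nat.mul_succ k _
    have hcm : (n-1)*k = k*(n-1) := Nat.mul_comm _ _
    have hsm : ((q.1:ℕ)+1)*k = k*((q.1:ℕ)+1) := Nat.mul_comm _ _
    have hsm2 : ((q.1:ℕ)+1-1)*k = k*(q.1:ℕ) := by
      rw [Nat.add_sub_cancel]; exact Nat.mul_comm _ _
    by_cases h2 : (q.2:ℕ) < k
    · have hlt : 2*k+m + (k*(q.1:ℕ) + (q.2:ℕ)) < NE n k m := by simp only [NE]; omega
      refine ⟨⟨_, hlt⟩, hS ((q.1:ℕ)+1) (by omega) (by omega) ?_,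
        mem_cov_point hk (q.1:ℕ) (q.2:ℕ) h2 q rfl rfl⟩
      rw [Sset, if_neg (by omega), mem_filter]
      refine ⟨mem_univ _, ?_⟩
      show 2*k+m+((q.1:ℕ)+1-1)*k ≤ 2*k+m + (k*(q.1:ℕ) + (q.2:ℕ)) ∧
        2*k+m + (k*(q.1:ℕ) + (q.2:ℕ)) < 2*k+m+((q.1:ℕ)+1)*k
      omega
    · set j := (q.2:ℕ) - 2*k with hj
      have hjm : j < m := by omega
      have hlt : 2*k+m + (k*(q.1:ℕ) + j) < NE n k m := by
        have : j < k := by omega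
        simp only [NE]; omega
      refine ⟨⟨_, hlt⟩, hS ((q.1:ℕ)+1) (by omega) (by omega) ?_,
        mem_cov_point2 hk hmk (q.1:ℕ) j hjm q rfl (by omega)⟩
      rw [Sset, if_neg (by omega), mem_filter]
      refine ⟨mem_univ _, ?_⟩
      show 2*k+m+((q.1:ℕ)+1-1)*k ≤ 2*k+m + (k*(q.1:ℕ) + j) ∧
        2*k+m + (k*(q.1:ℕ) + j) < 2*k+m+((q.1:ℕ)+1)*k
      omega

end S14

/-- Hard instance for the case m(n−1) ≤ k (Figure 2a in the paper). -/
theorem stmt14 (n k m : ℕ) (hn : 2 ≤ n) (hk : 1 ≤ k) (hmk : m * (n - 1) ≤ k) :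
    ∃ (N : ℕ) (f : Finset (Fin N) → ℝ) (Ss x z : ℕ → Finset (Fin N)),
      f ∅ = 0 ∧ IsMonotoneFn f ∧ IsSubmodularFn f ∧
      AugGreedy f Ss k m n x z ∧
      f ((Finset.range n).biUnion x) = ((k * (n - 1) + m * (n - 1) : ℕ) : ℝ) ∧
      OPTval f Ss n k = ((2 * k * (n - 1) + m * (n - 1) : ℕ) : ℝ) := by
  classical
  have hm : m ≤ k := by
    have h1 : m * 1 ≤ m * (n-1) := Nat.mul_le_mul_left m (by omega)
    omega
  have harith : ∀ u a b : ℕ, u*(a+b) = u*a + b*u := fun u a b => by ring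
  refine ⟨S14.NE n k m, S14.ff n k m, S14.Sset n k m, S14.xf n k m, S14.zf n k m,
    S14.ff_empty, fun A B h => S14.ff_mono h, fun A B h s _ => S14.ff_submodular h s,
    ?_, ?_, ?_⟩
  · -- AugGreedy
    intro i hi
    match i, hi with
    | 0, hi =>
      constructor
      · refine ⟨?_, ?_, ?_⟩
        · rw [S14.xf_zero]
          exact (S14.DD_subset_S0).trans Finset.subset_union_left
        · rw [S14.xf_zero, S14.card_DD]
        · intro c hc hck
          simp only [S14.pref_xf_zero, Finset.union_empty, S14.xf_zero]
          rw [S14.pref_zf_zero, Finset.union_empty] at hc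
          have hcs : ∀ a ∈ c, (a:ℕ) < 2*k+m := by
            intro a ha
            have h := hc ha
            rw [S14.Sset, if_pos rfl, Finset.mem_filter] at h
            exact h.2
          have h1 : (S14.cover n k m c).card ≤ c.card * (n-1) :=
            S14.cover_card_le_of_small hcs
          have h2 : c.card * (n-1) ≤ k * (n-1) := Nat.mul_le_mul_right _ hck
          rw [S14.ff_DD, S14.ff]
          have h3 : (S14.cover n k m c).card ≤ (n-1) * k := by
            have e : k * (n-1) = (n-1) * k := Nat.mul_comm _ _
            omega
          exact_mod_cast h3
      · refine ⟨S14.EE n k m, ∅, by rw [S14.zf_zero, Finset.union_empty],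
          S14.EE_subset_S0, ?_, ?_, Finset.empty_subset _, by simp⟩
        · rw [S14.card_EE]; exact le_min hm le_rfl
        · intro w hw hwc
          simp only [Nat.zero_add, S14.pref_xf_one]
          have hws : ∀ a ∈ w, (a:ℕ) < 2*k+m := by
            intro a ha
            have h := hw ha
            rw [S14.Sset, if_pos rfl, Finset.mem_filter] at h
            exact h.2
          have h1 : (S14.cover n k m (w ∪ S14.DD n k m)).card ≤ m*(n-1) + (n-1)*k := by
            rw [S14.cover_union, S14.cover_DD]
            refine le_trans (Finset.card_union_le _ _) ?_
            have ha : (S14.cover n k m w).card ≤ w.card * (n-1) :=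
              S14.cover_card_le_of_small hws
            have hb : w.card * (n-1) ≤ m * (n-1) :=
              Nat.mul_le_mul_right _ (le_trans hwc (min_le_right _ _))
            rw [S14.card_RR]
            have e : m * (n-1) = (n-1) * m := Nat.mul_comm _ _
            omega
          rw [S14.marg_eq, S14.marg_eq, S14.cover_DD, S14.card_RR]
          have e2 : ((S14.cover n k m (S14.EE n k m ∪ S14.DD n k m)).card)
              = (n-1)*(k+m) := by
            rw [Finset.union_comm, S14.cover_DE, S14.card_RX]
          rw [e2]
          have h1' : ((S14.cover n k m (w ∪ S14.DD n k m)).card : ℝ)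
              ≤ ((m*(n-1) + (n-1)*k : ℕ) : ℝ) := by exact_mod_cast h1
          have e3 : ((n-1)*(k+m) : ℕ) = (n-1)*k + m*(n-1) := harith (n-1) k m
          rw [e3]
          push_cast at h1' ⊢
          linarith
    | 1, hi =>
      constructor
      · refine ⟨?_, ?_, ?_⟩
        · rw [S14.xf_one, S14.pref_zf_ge1 le_rfl]
          exact Finset.subset_union_right
        · rw [S14.xf_one, S14.card_EE]; exact hm
        · intro c hc hck
          rw [S14.xf_one, S14.pref_xf_one]
          rw [S14.pref_zf_ge1 le_rfl] at hc
          rw [S14.ff_ED]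
          apply S14.ff_le_RX
          rw [S14.cover_union, S14.cover_DD]
          exact Finset.union_subset (S14.cover_c_subset_RX hk le_rfl hc) S14.RR_subset_RX
      · refine ⟨∅, ∅, by rw [S14.zf_ge1 le_rfl, Finset.union_empty],
          Finset.empty_subset _, by simp, ?_, Finset.empty_subset _, by simp⟩
        intro w hw hwc
        rw [S14.pref_xf_ge2 (show 2 ≤ 1+1 by omega)]
        have h0 : marg (S14.ff n k m) ∅ (S14.DD n k m ∪ S14.EE n k m) = 0 := by
          rw [marg, Finset.empty_union, sub_self]
        rw [h0]
        apply S14.marg_nonpos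
        rw [S14.cover_DE]
        exact S14.cover_c_subset_RX hk le_rfl (hw.trans Finset.subset_union_left)
    | (i+2), hi =>
      constructor
      · refine ⟨?_, ?_, ?_⟩
        · rw [S14.xf_ge2 (by omega)]; exact Finset.empty_subset _
        · rw [S14.xf_ge2 (by omega)]; simp
        · intro c hc hck
          rw [S14.xf_ge2 (by omega), S14.pref_xf_ge2 (by omega), Finset.empty_union]
          rw [S14.pref_zf_ge1 (by omega)] at hc
          rw [S14.ff_DE]
          apply S14.ff_le_RX
          rw [S14.cover_union, S14.cover_DE]
          exact Finset.union_subset (S14.cover_c_subset_RX hk (by omega) hc)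
            (Finset.Subset.refl _)
      · refine ⟨∅, ∅, by rw [S14.zf_ge1 (by omega), Finset.union_empty],
          Finset.empty_subset _, by simp, ?_, Finset.empty_subset _, by simp⟩
        intro w hw hwc
        rw [S14.pref_xf_ge2 (show 2 ≤ i+2+1 by omega)]
        have h0 : marg (S14.ff n k m) ∅ (S14.DD n k m ∪ S14.EE n k m) = 0 := by
          rw [marg, Finset.empty_union, sub_self]
        rw [h0]
        apply S14.marg_nonpos
        rw [S14.cover_DE]
        exact S14.cover_c_subset_RX hk (by omega) (hw.trans Finset.subset_union_left)
  · -- greedy value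
    rw [show (Finset.range n).biUnion (S14.xf n k m) = pref (S14.xf n k m) n from rfl,
      S14.pref_xf_ge2 hn, S14.ff_DE]
    norm_cast
    have e1 := harith (n-1) k m
    have e2 : (n-1)*k = k*(n-1) := Nat.mul_comm _ _
    omega
  · -- OPT value
    unfold OPTval
    have ebound : (((n-1)*(2*k+m) : ℕ) : ℝ) = ((2*k*(n-1)+m*(n-1) : ℕ) : ℝ) := by
      norm_cast
      have e1 := harith (n-1) (2*k) m
      have e2 : (n-1)*(2*k) = 2*k*(n-1) := Nat.mul_comm _ _
      omega
    apply le_antisymm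
    · apply Finset.sup'_le
      intro y hy
      exact le_of_le_of_eq (S14.ff_le_univ _) ebound
    · set yy : Fin n → Finset (Fin (S14.NE n k m)) :=
        fun i => if (i:ℕ) = 0 then S14.GG n k m else S14.Sset n k m (i:ℕ) with hyy
      have hmem : yy ∈ Finset.univ.filter
          (fun y : Fin n → Finset (Fin (S14.NE n k m)) =>
            ∀ i : Fin n, y i ⊆ S14.Sset n k m (i:ℕ) ∧ (y i).card ≤ k) := by
        rw [Finset.mem_filter]
        refine ⟨Finset.mem_univ _, fun i => ?_⟩
        by_cases h : (i:ℕ) = 0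
        · rw [hyy]
          simp only [if_pos h, h]
          exact ⟨S14.GG_subset_S0, le_of_eq S14.card_GG⟩
        · rw [hyy]
          simp only [if_neg h]
          exact ⟨Finset.Subset.refl _, le_of_eq (S14.card_Sset (by omega) i.isLt)⟩
      have hval : S14.ff n k m (Finset.univ.biUnion (fun i => yy i))
          = (((n-1)*(2*k+m) : ℕ) : ℝ) := by
        apply S14.ff_univ_of_cover_univ
        apply S14.cover_opt hn hk hm
        · have h0 : yy ⟨0, by omega⟩ = S14.GG n k m := by rw [hyy]; simp
          exact h0 ▸ Finset.subset_biUnion_of_mem (fun i => yy i) (Finset.mem_univ (⟨0, by omega⟩ : Fin n))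
        · intro j hj1 hj2
          have h0 : yy ⟨j, hj2⟩ = S14.Sset n k m j := by
            rw [hyy]
            show (if j = 0 then S14.GG n k m else S14.Sset n k m j) = S14.Sset n k m j
            rw [if_neg (by omega)]
          exact h0 ▸ Finset.subset_biUnion_of_mem (fun i => yy i) (Finset.mem_univ (⟨j, hj2⟩ : Fin n))
      have hle := Finset.le_sup'
        (fun y : Fin n → Finset (Fin (S14.NE n k m)) =>
          S14.ff n k m (Finset.univ.biUnion (fun i => y i))) hmem
      rw [hval] at hle
      exact le_of_eq_of_le ebound.symm hle
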